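/- Let k ≥ 1 be an integer, let ℓ ≥ 0 be a real number, let N be the disjoint union of finite sets O and Y each of size k, and let f : 2^N → ℝ be defined by f(S) = (|S ∩ O|/k)·(1 − |S ∩ Y|/k) + ( g(|S ∩ Y|/k) + ℓ·|S ∩ Y|/k² )·(1 − |S ∩ O|/k). Then f(O) = 1, while every set S ⊆ Y satisfies f(S) ≤ 1/e + ℓ/k. -/

import Mathlib

/-- `-t * log t ≤ 1/e` for `t > 0`. -/
lemma neg_mul_log_le (t : ℝ) (ht : 0 < t) : -(t * Real.log t) ≤ 1 / Real.exp 1 := by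
  have he : (0:ℝ) < Real.exp 1 := Real.exp_pos 1
  have h := Real.log_le_sub_one_of_pos (show (0:ℝ) < 1 / (Real.exp 1 * t) by positivity)
  have hlog : Real.log (1 / (Real.exp 1 * t)) = -(1 + Real.log t) := by
    rw [Real.log_div one_ne_zero (by positivity), Real.log_mul (ne_of_gt he) (ne_of_gt ht),
      Real.log_exp, Real.log_one]
    ring
  rw [hlog] at h
  have h2 : -Real.log t ≤ 1 / (Real.exp 1 * t) := by linarith
  have h3 : t * (-Real.log t) ≤ t * (1 / (Real.exp 1 * t)) :=
    mul_le_mul_of_nonneg_left h2 ht.le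
  have h4 : t * (1 / (Real.exp 1 * t)) = 1 / Real.exp 1 := by
    field_simp
  linarith [h4 ▸ h3]

/-- For the bad instance, `f(O) = 1` while every subset `S ⊆ Y` has
`f(S) ≤ 1/e + ℓ/k`. -/
theorem bad_instance_values {N : Type*} [Fintype N] [DecidableEq N]
    (k : ℕ) (hk : 1 ≤ k) (l : ℝ) (hl : 0 ≤ l)
    (O Y : Finset N) (hdisj : Disjoint O Y) (hunion : O ∪ Y = Finset.univ)
    (hO : O.card = k) (hY : Y.card = k)
    (g : ℝ → ℝ)
    (hg1 : ∀ x ∈ Set.Icc (0 : ℝ) (1 - 1 / Real.exp 1),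
      g x = (x - 1) * Real.log (1 - x))
    (hg2 : ∀ x ∈ Set.Icc (1 - 1 / Real.exp 1) (1 : ℝ), g x = 1 / Real.exp 1)
    (f : Finset N → ℝ)
    (hf : ∀ S : Finset N,
      f S = ((S ∩ O).card : ℝ) / k * (1 - ((S ∩ Y).card : ℝ) / k)
        + (g (((S ∩ Y).card : ℝ) / k) + l * ((S ∩ Y).card : ℝ) / (k : ℝ) ^ 2)
          * (1 - ((S ∩ O).card : ℝ) / k)) :
    f O = 1 ∧ ∀ S : Finset N, S ⊆ Y → f S ≤ 1 / Real.exp 1 + l / k := by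
  have hk0 : (0:ℝ) < (k:ℝ) := by exact_mod_cast hk
  have he : (0:ℝ) < Real.exp 1 := Real.exp_pos 1
  constructor
  · rw [hf, Finset.inter_self, Finset.disjoint_iff_inter_eq_empty.mp hdisj, hO]
    simp
    field_simp
    ring
  · intro S hS
    have hSO : S ∩ O = ∅ := by
      rw [Finset.inter_comm]
      exact Finset.disjoint_iff_inter_eq_empty.mp (hdisj.mono_right hS)
    have hSY : S ∩ Y = S := Finset.inter_eq_left.mpr hS
    rw [hf, hSO, hSY]
    simp only [Finset.card_empty, Nat.cast_zero, zero_div, zero_mul, zero_add, sub_zero, mul_one]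
    have hsk : (S.card : ℝ) ≤ k := by
      have := Finset.card_le_card hS
      rw [hY] at this
      exact_mod_cast this
    have hs0 : (0:ℝ) ≤ (S.card : ℝ) := by positivity
    set x : ℝ := (S.card : ℝ) / k with hx
    have hx0 : 0 ≤ x := by positivity
    have hx1 : x ≤ 1 := by rw [hx, div_le_one hk0]; exact hsk
    have hgx : g x ≤ 1 / Real.exp 1 := by
      by_cases hc : x ≤ 1 - 1 / Real.exp 1
      · rw [hg1 x ⟨hx0, hc⟩]
        have ht : 0 < 1 - x := by
          have : 1 / Real.exp 1 > 0 := by positivity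
          linarith
        have := neg_mul_log_le (1 - x) ht
        nlinarith [this]
      · rw [hg2 x ⟨le_of_not_ge hc, hx1⟩]
    have hlin : l * (S.card : ℝ) / (k:ℝ)^2 ≤ l / k := by
      rw [div_le_div_iff₀ (by positivity) hk0]
      calc l * (S.card : ℝ) * k ≤ l * k * k := by
            nlinarith [mul_le_mul_of_nonneg_left hsk (mul_nonneg hl hk0.le)]
        _ = l * (k:ℝ)^2 := by ring
    linarith
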